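/- (Theorem 3, positivity consequence) Let n ≥ 1, let n₁ be an integer with 1 ≤ n₁ ≤ n, set n₂ = n − n₁ and β = n/n₁, and let σ₁, …, σₙ be positive reals and b₁, …, bₙ reals. Define G(ρ) = (Σᵢ₌₁ⁿ σᵢ²bᵢ²/(σᵢ²+ρ)²)·(Σⱼ₌₁^{n₁} (βσⱼ²+ρ)/(σⱼ²+ρ)²) + (n₂/ρ)·(Σᵢ₌₁ⁿ σᵢ²bᵢ²/(σᵢ²+ρ)²) − (Σᵢ₌₁ⁿ bᵢ²/(σᵢ²+ρ)²)·(Σⱼ₌₁^{n₁} σⱼ²(βσⱼ²+ρ)/(σⱼ²+ρ)²). If n·(Σⱼ₌₁ⁿ σⱼ²bⱼ²) > (Σᵢ₌₁^{n₁} σᵢ²)·(Σⱼ₌₁ⁿ bⱼ²), then there exists ρ₀ > 0 such that G(ρ) > 0 for every ρ > ρ₀; that is, G approaches its limit 0 at +∞ from the positive direction. -/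

import Mathlib

open Filter Topology Finset

private lemma copra_aux_inv (a : ℝ) :
    Tendsto (fun ρ : ℝ => (a + ρ)⁻¹) atTop (𝓝 0) :=
  tendsto_inv_atTop_zero.comp (tendsto_atTop_add_const_left _ a tendsto_id)

private lemma copra_aux_ratio (a : ℝ) :
    Tendsto (fun ρ : ℝ => ρ / (a + ρ)) atTop (𝓝 1) := by
  have h : Tendsto (fun ρ : ℝ => 1 - a * (a + ρ)⁻¹) atTop (𝓝 1) := by
    have := (copra_aux_inv a).const_mul a
    simpa using (tendsto_const_nhds (x := (1:ℝ))).sub this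
  refine h.congr' ?_
  filter_upwards [eventually_gt_atTop (|a| + 1)] with ρ hρ
  have hne : a + ρ ≠ 0 := by
    have := neg_abs_le a
    nlinarith [abs_nonneg a]
  field_simp
  ring

private lemma copra_aux_ratio2 (a c : ℝ) :
    Tendsto (fun ρ : ℝ => (c + ρ) / (a + ρ)) atTop (𝓝 1) := by
  have h : Tendsto (fun ρ : ℝ => c * (a + ρ)⁻¹ + ρ / (a + ρ)) atTop (𝓝 1) := by
    have h1 := (copra_aux_inv a).const_mul c
    simpa using h1.add (copra_aux_ratio a)
  refine h.congr fun ρ => ?_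
  rw [add_div, div_eq_mul_inv c]

private lemma copra_aux_sq (a c : ℝ) :
    Tendsto (fun ρ : ℝ => ρ ^ 2 * (c / (a + ρ) ^ 2)) atTop (𝓝 c) := by
  have h : Tendsto (fun ρ : ℝ => c * (ρ / (a + ρ)) ^ 2) atTop (𝓝 c) := by
    have := ((copra_aux_ratio a).pow 2).const_mul c
    simpa using this
  refine h.congr fun ρ => ?_
  rw [div_pow]; ring

private lemma copra_aux_lin (a c : ℝ) :
    Tendsto (fun ρ : ℝ => ρ * ((c + ρ) / (a + ρ) ^ 2)) atTop (𝓝 1) := by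
  have h : Tendsto (fun ρ : ℝ => (ρ / (a + ρ)) * ((c + ρ) / (a + ρ))) atTop (𝓝 1) := by
    have := (copra_aux_ratio a).mul (copra_aux_ratio2 a c)
    simpa using this
  refine h.congr fun ρ => ?_
  rw [div_mul_div_comm, ← sq, mul_div_assoc]

private lemma copra_aux_lin' (a c s : ℝ) :
    Tendsto (fun ρ : ℝ => ρ * (s * (c + ρ) / (a + ρ) ^ 2)) atTop (𝓝 s) := by
  have h : Tendsto (fun ρ : ℝ => s * (ρ * ((c + ρ) / (a + ρ) ^ 2))) atTop (𝓝 s) := by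
    have := (copra_aux_lin a c).const_mul s
    simpa using this
  refine h.congr fun ρ => ?_
  rw [mul_div_assoc]; ring

/-- The COPRA characteristic function `G(ρ)`. -/
noncomputable def copraG (n n₁ : ℕ) (σ b : ℕ → ℝ) (ρ : ℝ) : ℝ :=
  (∑ i ∈ Finset.range n, σ i ^ 2 * b i ^ 2 / (σ i ^ 2 + ρ) ^ 2) *
      (∑ j ∈ Finset.range n₁,
        (((n : ℝ) / n₁) * σ j ^ 2 + ρ) / (σ j ^ 2 + ρ) ^ 2)
    + (((n - n₁ : ℕ) : ℝ) / ρ) *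
        (∑ i ∈ Finset.range n, σ i ^ 2 * b i ^ 2 / (σ i ^ 2 + ρ) ^ 2)
    - (∑ i ∈ Finset.range n, b i ^ 2 / (σ i ^ 2 + ρ) ^ 2) *
        (∑ j ∈ Finset.range n₁,
          σ j ^ 2 * (((n : ℝ) / n₁) * σ j ^ 2 + ρ) / (σ j ^ 2 + ρ) ^ 2)

/-- (Theorem 3, positivity consequence) If
`n·Σⱼ σⱼ²bⱼ² > (Σᵢ₌₁^{n₁} σᵢ²)·(Σⱼ bⱼ²)`, then `G(ρ) > 0` for all sufficiently large `ρ`;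
i.e. `G` approaches its limit `0` at `+∞` from the positive direction. -/
theorem stmt_14 (n n₁ : ℕ) (hn : 1 ≤ n) (hn₁ : 1 ≤ n₁) (hn₁n : n₁ ≤ n)
    (σ b : ℕ → ℝ) (hσ : ∀ i < n, 0 < σ i)
    (hcond : (∑ i ∈ Finset.range n₁, σ i ^ 2) * (∑ j ∈ Finset.range n, b j ^ 2)
      < (n : ℝ) * (∑ j ∈ Finset.range n, σ j ^ 2 * b j ^ 2)) :
    ∃ ρ₀ : ℝ, 0 < ρ₀ ∧ ∀ ρ : ℝ, ρ₀ < ρ → 0 < copraG n n₁ σ b ρ := by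
  set S : ℝ := ∑ j ∈ Finset.range n, σ j ^ 2 * b j ^ 2 with hS
  set Bsq : ℝ := ∑ j ∈ Finset.range n, b j ^ 2 with hBsq
  set Ssig : ℝ := ∑ i ∈ Finset.range n₁, σ i ^ 2 with hSsig
  -- limits of the four pieces
  have hA : Tendsto (fun ρ : ℝ =>
      ρ ^ 2 * ∑ i ∈ Finset.range n, σ i ^ 2 * b i ^ 2 / (σ i ^ 2 + ρ) ^ 2)
      atTop (𝓝 S) := by
    have := tendsto_finset_sum (Finset.range n)
      (fun i _ => copra_aux_sq (σ i ^ 2) (σ i ^ 2 * b i ^ 2))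
    refine this.congr fun ρ => ?_
    rw [Finset.mul_sum]
  have hB : Tendsto (fun ρ : ℝ =>
      ρ * ∑ j ∈ Finset.range n₁,
        (((n : ℝ) / n₁) * σ j ^ 2 + ρ) / (σ j ^ 2 + ρ) ^ 2)
      atTop (𝓝 (n₁ : ℝ)) := by
    have := tendsto_finset_sum (Finset.range n₁)
      (fun j _ => copra_aux_lin (σ j ^ 2) (((n : ℝ) / n₁) * σ j ^ 2))
    simp only [Finset.sum_const, Finset.card_range, nsmul_eq_mul, mul_one] at this
    refine this.congr fun ρ => ?_
    rw [Finset.mul_sum]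
  have hC : Tendsto (fun ρ : ℝ =>
      ρ ^ 2 * ∑ i ∈ Finset.range n, b i ^ 2 / (σ i ^ 2 + ρ) ^ 2)
      atTop (𝓝 Bsq) := by
    have := tendsto_finset_sum (Finset.range n)
      (fun i _ => copra_aux_sq (σ i ^ 2) (b i ^ 2))
    refine this.congr fun ρ => ?_
    rw [Finset.mul_sum]
  have hD : Tendsto (fun ρ : ℝ =>
      ρ * ∑ j ∈ Finset.range n₁,
        σ j ^ 2 * (((n : ℝ) / n₁) * σ j ^ 2 + ρ) / (σ j ^ 2 + ρ) ^ 2)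
      atTop (𝓝 Ssig) := by
    have := tendsto_finset_sum (Finset.range n₁)
      (fun j _ => copra_aux_lin' (σ j ^ 2) (((n : ℝ) / n₁) * σ j ^ 2) (σ j ^ 2))
    refine this.congr fun ρ => ?_
    rw [Finset.mul_sum]
  -- the limit of ρ³ G(ρ)
  set L : ℝ := S * n₁ + ((n - n₁ : ℕ) : ℝ) * S - Bsq * Ssig with hL
  have hLpos : 0 < L := by
    have hcast : ((n - n₁ : ℕ) : ℝ) = (n : ℝ) - (n₁ : ℝ) := by
      push_cast [Nat.cast_sub hn₁n]; ring
    rw [hL, hcast]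
    nlinarith [hcond]
  have htend : Tendsto (fun ρ : ℝ => ρ ^ 3 * copraG n n₁ σ b ρ) atTop (𝓝 L) := by
    have h := ((hA.mul hB).add (hA.const_mul ((n - n₁ : ℕ) : ℝ))).sub (hC.mul hD)
    have hLeq : S * (n₁ : ℝ) + ((n - n₁ : ℕ) : ℝ) * S - Bsq * Ssig = L := rfl
    rw [hLeq] at h
    refine h.congr' ?_
    filter_upwards [eventually_gt_atTop (0 : ℝ)] with ρ hρ
    have hρ' : ρ ≠ 0 := ne_of_gt hρ
    unfold copraG
    field_simp
  -- eventual positivity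
  have hev : ∀ᶠ ρ : ℝ in atTop, 0 < ρ ^ 3 * copraG n n₁ σ b ρ :=
    htend.eventually (eventually_gt_nhds hLpos)
  have hev' : ∀ᶠ ρ : ℝ in atTop, 0 < copraG n n₁ σ b ρ := by
    filter_upwards [hev, eventually_gt_atTop (0 : ℝ)] with ρ h1 h2
    nlinarith [pow_pos h2 3]
  obtain ⟨M, hM⟩ := eventually_atTop.mp hev'
  refine ⟨max M 1, lt_of_lt_of_le one_pos (le_max_right _ _), fun ρ hρ => ?_⟩
  exact hM ρ (le_of_lt (lt_of_le_of_lt (le_max_left _ _) hρ))
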